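/- Let m ≥ 2 and n ≥ 1 be integers and let M be the commutative monoid presented by generators u, v and the relation u + v = m·u + n·v. Then M does not satisfy pseudo-cancellation: setting a = (m−1)·u, b = v, c = u, one has a + c ≤ b + c, but there is no a₁ ∈ M with a₁ + c ≤ c and a ≤ b + a₁. -/

import Mathlib

/-- The congruence on `ℕ × ℕ` (the free commutative monoid on generators
`u = (1,0)` and `v = (0,1)`) generated by the relation `u + v = m·u + n·v`. -/
def conUV (m n : ℕ) : AddCon (ℕ × ℕ) :=
  addConGen (fun a b => a = ((1, 1) : ℕ × ℕ) ∧ b = ((m, n) : ℕ × ℕ))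

/-- Auxiliary congruence: two pairs are related iff they are equal or both have
all coordinates positive. -/
def posCon : AddCon (ℕ × ℕ) where
  r a b := a = b ∨ (1 ≤ a.1 ∧ 1 ≤ a.2 ∧ 1 ≤ b.1 ∧ 1 ≤ b.2)
  iseqv := ⟨fun _ => Or.inl rfl, by rintro a b (rfl | h) <;> tauto, by
    rintro a b c (rfl | h) (rfl | h2) <;> tauto⟩
  add' := by
    rintro a b c d (rfl | h) (rfl | h2)
    · exact Or.inl rfl
    · right; simp only [Prod.fst_add, Prod.snd_add]; omega
    · right; simp only [Prod.fst_add, Prod.snd_add]; omega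
    · right; simp only [Prod.fst_add, Prod.snd_add]; omega

lemma conUV_le (m n : ℕ) (hm : 2 ≤ m) (hn : 1 ≤ n) : conUV m n ≤ posCon := by
  apply AddCon.addConGen_le.mpr
  rintro a b ⟨rfl, rfl⟩
  right
  simp only
  omega

theorem stmt2 (m n : ℕ) (hm : 2 ≤ m) (hn : 1 ≤ n) :
    (∃ x : (conUV m n).Quotient,
        ((m - 1) • ((conUV m n).mk' (1, 0)) + (conUV m n).mk' (1, 0)) + x
          = (conUV m n).mk' (0, 1) + (conUV m n).mk' (1, 0)) ∧
    ¬ ∃ a₁ : (conUV m n).Quotient,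
        (∃ x, (a₁ + (conUV m n).mk' (1, 0)) + x = (conUV m n).mk' (1, 0)) ∧
        (∃ y, (m - 1) • ((conUV m n).mk' (1, 0)) + y = (conUV m n).mk' (0, 1) + a₁) := by
  constructor
  · refine ⟨(conUV m n).mk' (0, n), ?_⟩
    rw [← map_nsmul, ← map_add, ← map_add, ← map_add]
    have h1 : (m - 1) • ((1, 0) : ℕ × ℕ) + (1, 0) + (0, n) = (m, n) := by
      simp [Prod.ext_iff]; omega
    have h2 : ((0, 1) : ℕ × ℕ) + (1, 0) = (1, 1) := by
      simp [Prod.ext_iff]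
    rw [h1, h2]
    exact ((conUV m n).eq).mpr ((conUV m n).symm (AddConGen.Rel.of _ _ ⟨rfl, rfl⟩))
  · rintro ⟨a₁, ⟨x, hx⟩, ⟨y, hy⟩⟩
    obtain ⟨⟨p, q⟩, rfl⟩ := (conUV m n).mk'_surjective a₁
    obtain ⟨⟨x1, x2⟩, rfl⟩ := (conUV m n).mk'_surjective x
    obtain ⟨⟨y1, y2⟩, rfl⟩ := (conUV m n).mk'_surjective y
    rw [← map_add, ← map_add] at hx
    have hx' := conUV_le m n hm hn (((conUV m n).eq).mp hx)
    have hpq : p = 0 ∧ q = 0 := by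
      rcases hx' with h | h
      · simp [Prod.ext_iff] at h; omega
      · simp at h
    obtain ⟨rfl, rfl⟩ := hpq
    rw [← map_nsmul, ← map_add, ← map_add] at hy
    have hy' := conUV_le m n hm hn (((conUV m n).eq).mp hy)
    have h1 : ((m - 1) • ((1, 0) : ℕ × ℕ) + (y1, y2)).1 = m - 1 + y1 := by
      simp
    rcases hy' with h | h
    · rw [Prod.ext_iff] at h
      simp at h
      omega
    · simp at h
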